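/- Let T be an irreducible Salem polynomial of degree m ≥ 4 and let P ∈ ℝ[z] of degree m satisfy (z-1)T(z) = zP(z) - P*(z). If P is expansive then P(1)·T(1) < 0. -/

import Mathlib

open Polynomial

private lemma my_eval_reflect (P : ℝ[X]) (m : ℕ) (h : P.natDegree ≤ m) (y : ℝ) (hy : y ≠ 0) :
    (P.reflect m).eval y = y ^ m * P.eval y⁻¹ := by
  have : Invertible (y⁻¹ : ℝ) := invertibleOfNonzero (inv_ne_zero hy)
  have h2 := eval₂_reflect_mul_pow (RingHom.id ℝ) (y⁻¹) m P h
  rw [invOf_eq_inv, inv_inv] at h2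
  have h3 : (P.reflect m).eval y * (y⁻¹) ^ m = P.eval y⁻¹ := h2
  have hym : y ^ m ≠ 0 := pow_ne_zero _ hy
  field_simp at h3
  rw [one_div] at h3; rw [← h3, inv_pow, ← mul_assoc, mul_comm (y ^ m), mul_assoc, mul_inv_cancel₀ hym, mul_one]

private lemma my_pos_of_no_root (p : ℝ[X]) (hlc : 0 < p.leadingCoeff) (hdeg : 0 < p.degree)
    (a : ℝ) (h : ∀ x, a ≤ x → p.eval x ≠ 0) : ∀ x, a ≤ x → 0 < p.eval x := by
  intro x hx
  by_contra hle
  push_neg at hle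
  have hlt : p.eval x < 0 := lt_of_le_of_ne hle (h x hx)
  have htop := p.tendsto_atTop_of_leadingCoeff_nonneg hdeg hlc.le
  obtain ⟨b, hb1, hb2⟩ := ((htop.eventually_ge_atTop 1).and (Filter.eventually_ge_atTop x)).exists
  have hcont : ContinuousOn (fun t => p.eval t) (Set.Icc x b) := (p.continuous_aeval).continuousOn
  have h0 : (0 : ℝ) ∈ Set.Icc (p.eval x) (p.eval b) := ⟨hlt.le, by linarith⟩
  obtain ⟨c, hc, hc0⟩ := intermediate_value_Icc hb2 hcont h0
  exact h c (hx.trans hc.1) hc0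

/-- Let `T ∈ ℤ[z]` be an irreducible Salem polynomial of degree `m ≥ 4` and let
`P ∈ ℝ[z]` of degree `m` satisfy `(z-1)T(z) = zP(z) - P*(z)`. If `P` is
expansive then `P(1) T(1) < 0`. -/
theorem P_one_T_one_neg
    (T : ℤ[X]) (m : ℕ) (hm : 4 ≤ m)
    (hTmonic : T.Monic) (hTirr : Irreducible T) (hTdeg : T.natDegree = m)
    (β : ℝ) (hβ : 1 < β) (hβroot : aeval β T = 0)
    (houtside : ∀ z : ℂ, aeval z T = 0 → 1 < ‖z‖ → z = (β : ℂ))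
    (honcircle : ∃ z : ℂ, aeval z T = 0 ∧ ‖z‖ = 1)
    (P : ℝ[X]) (hPdeg : P.natDegree = m)
    (hassoc : (X - 1) * T.map (Int.castRingHom ℝ) = X * P - P.reflect m)
    (hPexp : ∀ z : ℂ, aeval z P = 0 → 1 < ‖z‖) :
    P.eval 1 * (T.map (Int.castRingHom ℝ)).eval 1 < 0 := by
  set Tr : ℝ[X] := T.map (Int.castRingHom ℝ) with hTrdef
  have hTrmonic : Tr.Monic := hTmonic.map _
  have hTrdeg : Tr.natDegree = m := by
    rw [hTrdef, hTmonic.natDegree_map]; exact hTdeg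
  have hTrne : Tr ≠ 0 := hTrmonic.ne_zero
  have hTrdegpos : 0 < Tr.degree := by
    rw [← natDegree_pos_iff_degree_pos, hTrdeg]; omega
  -- β is a root of Tr
  have hTrβ : Tr.eval β = 0 := by
    have := hβroot
    rwa [aeval_def, algebraMap_int_eq, eval₂_eq_eval_map] at this
  -- every real root of Tr of modulus > 1 is β
  have hroots : ∀ x : ℝ, Tr.eval x = 0 → 1 < |x| → x = β := by
    intro x hx habs
    have h1 : aeval x T = 0 := by
      rw [aeval_def, algebraMap_int_eq, eval₂_eq_eval_map]; exact hx
    have h2 : aeval ((x : ℝ) : ℂ) T = 0 := by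
      rw [show ((x : ℝ) : ℂ) = algebraMap ℝ ℂ x from rfl, aeval_algebraMap_apply, h1, map_zero]
    have := houtside x h2 (by rwa [Complex.norm_real, Real.norm_eq_abs])
    exact_mod_cast this
  -- Tr does not vanish at integers
  have hint : ∀ c : ℤ, T.eval c ≠ 0 := by
    intro c hc
    obtain ⟨q, hq⟩ := dvd_iff_isRoot.mpr hc
    rcases hTirr.isUnit_or_isUnit hq with h | h
    · exact (Polynomial.not_isUnit_X_sub_C c) h
    · have hq0 : q.natDegree = 0 := natDegree_eq_zero_of_isUnit h
      have hqne : q ≠ 0 := h.ne_zero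
      have : T.natDegree = 1 := by
        rw [hq, natDegree_mul (X_sub_C_ne_zero c) hqne, natDegree_X_sub_C, hq0]
      omega
  have hcast : ∀ c : ℤ, Tr.eval ((c : ℤ) : ℝ) = ((T.eval c : ℤ) : ℝ) := by
    intro c
    rw [hTrdef, eval_map]
    exact eval₂_at_apply (Int.castRingHom ℝ) c
  have hT1 : Tr.eval 1 ≠ 0 := by
    have := hcast 1
    simp only [Int.cast_one] at this
    rw [this]
    exact_mod_cast hint 1
  have hTm1 : Tr.eval (-1) ≠ 0 := by
    have := hcast (-1)
    simp only [Int.cast_neg, Int.cast_one] at this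
    rw [this]
    exact_mod_cast hint (-1)
  -- Tr is positive to the right of β
  have hTpos : ∀ x, β < x → 0 < Tr.eval x := by
    intro x hx
    refine my_pos_of_no_root Tr (by rw [hTrmonic.leadingCoeff]; norm_num) hTrdegpos x
      (fun y hy hy0 => ?_) x le_rfl
    have : y = β := hroots y hy0 (by rw [abs_of_pos (by linarith)]; linarith)
    linarith
  -- reflect evaluation
  have hre : ∀ y : ℝ, y ≠ 0 → (P.reflect m).eval y = y ^ m * P.eval y⁻¹ :=
    fun y hy => my_eval_reflect P m hPdeg.le y hy
  -- evaluate the structural identity at -1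
  have hm1 := congrArg (eval (-1 : ℝ)) hassoc
  rw [eval_mul, eval_sub, eval_sub, eval_mul, eval_X, eval_one,
    hre (-1) (by norm_num)] at hm1
  simp only [inv_neg, inv_one] at hm1
  -- m is even
  have hmeven : Even m := by
    rcases Nat.even_or_odd m with h | h
    · exact h
    · exfalso
      rw [h.neg_one_pow] at hm1
      apply hTm1
      nlinarith [hm1]
  rw [hmeven.neg_one_pow] at hm1
  -- P(-1) = Tr(-1)
  have hPm1 : P.eval (-1) = Tr.eval (-1) := by nlinarith [hm1]
  -- Tr(-1) > 0 via composition with -X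
  have hTm1pos : 0 < Tr.eval (-1) := by
    set Tc : ℝ[X] := Tr.comp (-X) with hTc
    have hTceval : ∀ x : ℝ, Tc.eval x = Tr.eval (-x) := by
      intro x; rw [hTc, eval_comp, eval_neg, eval_X]
    have hTclc : 0 < Tc.leadingCoeff := by
      rw [hTc, leadingCoeff_comp (by rw [natDegree_neg, natDegree_X]; norm_num)]
      rw [hTrmonic.leadingCoeff, leadingCoeff_neg, leadingCoeff_X, hTrdeg, hmeven.neg_one_pow]
      norm_num
    have hTcdeg : 0 < Tc.degree := by
      rw [← natDegree_pos_iff_degree_pos, hTc,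
        natDegree_comp, natDegree_neg, natDegree_X, hTrdeg]
      omega
    have hnr : ∀ y, (1:ℝ) ≤ y → Tc.eval y ≠ 0 := by
      intro y hy hy0
      rw [hTceval] at hy0
      rcases eq_or_lt_of_le hy with h | h
      · exact hTm1 (by rwa [← h] at hy0)
      · have : -y = β := hroots _ hy0 (by rw [abs_neg, abs_of_pos (by linarith)]; linarith)
        linarith
    have := my_pos_of_no_root Tc hTclc hTcdeg 1 hnr 1 le_rfl
    rwa [hTceval] at this
  have hPm1pos : 0 < P.eval (-1) := by rw [hPm1]; exact hTm1pos
  -- P has no real roots of modulus ≤ 1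
  have hProots : ∀ x : ℝ, |x| ≤ 1 → P.eval x ≠ 0 := by
    intro x hx hev
    have h2 : aeval ((x : ℝ) : ℂ) P = 0 := by
      rw [show ((x : ℝ) : ℂ) = algebraMap ℝ ℂ x from rfl, aeval_algebraMap_apply]
      simp [aeval_def, eval₂_eq_eval_map, Polynomial.map_id, hev]
    have := hPexp x h2
    rw [Complex.norm_real, Real.norm_eq_abs] at this
    linarith
  -- P(1) > 0
  have hP1pos : 0 < P.eval 1 := by
    rcases lt_trichotomy (P.eval 1) 0 with h | h | h
    · exfalso
      have hcont : ContinuousOn (fun t => P.eval t) (Set.Icc (-1 : ℝ) 1) :=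
        P.continuous_aeval.continuousOn
      have h0 : (0 : ℝ) ∈ Set.Icc (P.eval 1) (P.eval (-1)) := ⟨h.le, hPm1pos.le⟩
      obtain ⟨c, hc, hc0⟩ := intermediate_value_Icc' (by norm_num : (-1:ℝ) ≤ 1) hcont h0
      exact hProots c (abs_le.mpr ⟨hc.1, hc.2⟩) hc0
    · exact absurd h (hProots 1 (by norm_num))
    · exact h
  -- separability of Tr
  have hTrsep : Tr.Separable := by
    have hQirr : Irreducible (T.map (algebraMap ℤ ℚ)) :=
      (hTmonic.irreducible_iff_irreducible_map_fraction_map).mp hTirr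
    have hQsep : (T.map (algebraMap ℤ ℚ)).Separable := hQirr.separable
    have := hQsep.map (f := algebraMap ℚ ℝ)
    rw [Polynomial.map_map] at this
    rwa [show (algebraMap ℚ ℝ).comp (algebraMap ℤ ℚ) = Int.castRingHom ℝ from
      RingHom.ext_int _ _] at this
  obtain ⟨u, v, huv⟩ := hTrsep
  -- factor Tr = (X - C β) * Q
  obtain ⟨Q, hQ⟩ := dvd_iff_isRoot.mpr hTrβ
  have hQβ : Q.eval β ≠ 0 := by
    intro h0
    have hder : (derivative Tr).eval β = Q.eval β := by
      rw [hQ, derivative_mul]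
      simp [eval_add, eval_mul, eval_sub, eval_X, eval_C]
    have := congrArg (eval β) huv
    rw [eval_add, eval_mul, eval_mul, hTrβ, hder, h0, eval_one] at this
    simp at this
  have hQposgt : ∀ x, β < x → 0 < Q.eval x := by
    intro x hx
    have h1 := hTpos x hx
    rw [hQ, eval_mul, eval_sub, eval_X, eval_C] at h1
    nlinarith [h1]
  have hQβpos : 0 < Q.eval β := by
    rcases lt_trichotomy (Q.eval β) 0 with h | h | h
    · exfalso
      have hev : ∀ᶠ x in nhdsWithin β (Set.Ioi β), Q.eval x < 0 :=
        ((Q.continuous_aeval.tendsto β).eventually_lt_const h).filter_mono nhdsWithin_le_nhds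
      obtain ⟨x, hx1, hx2⟩ := (hev.and (eventually_mem_nhdsWithin)).exists
      exact absurd (hQposgt x hx2) (by linarith)
    · exact absurd h hQβ
    · exact h
  have hQ1pos : 0 < Q.eval 1 := by
    rcases lt_trichotomy (Q.eval 1) 0 with h | h | h
    · exfalso
      have hcont : ContinuousOn (fun t => Q.eval t) (Set.Icc (1 : ℝ) β) :=
        Q.continuous_aeval.continuousOn
      have h0 : (0 : ℝ) ∈ Set.Icc (Q.eval 1) (Q.eval β) := ⟨h.le, hQβpos.le⟩
      obtain ⟨c, hc, hc0⟩ := intermediate_value_Icc hβ.le hcont h0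
      have hc0' : Q.eval c = 0 := hc0
      have hTrc : Tr.eval c = 0 := by rw [hQ, eval_mul, hc0', mul_zero]
      rcases eq_or_lt_of_le hc.1 with h1 | h1
      · exact hT1 (by rwa [← h1] at hTrc)
      · have hcβ : c = β := hroots c hTrc (by rw [abs_of_pos (by linarith)]; exact h1)
        exact hQβ (by rwa [← hcβ])
    · exfalso
      apply hT1
      rw [hQ, eval_mul, h, mul_zero]
    · exact h
  have hTr1neg : Tr.eval 1 < 0 := by
    rw [hQ, eval_mul, eval_sub, eval_X, eval_C]
    exact mul_neg_of_neg_of_pos (by linarith) hQ1pos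
  exact mul_neg_of_pos_of_neg hP1pos hTr1neg
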